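/- In the reduction from bin packing to weighted k-AV, the constructed history instance with k = B + 2 has a weighted-k-atomic valid total order if and only if the bin packing instance (n items with sizes s_i, m bins of capacity B) has a solution. -/

import Mathlib

open scoped Classical

/-- An operation in a weighted history: start/finish times (rational), type,
value, and a weight (relevant for writes). -/
structure WOp where
  s : ℚ
  f : ℚ
  isRead : Bool
  val : ℕ
  wt : ℕ
deriving DecidableEq

/-- `a` occurs before `b` in the total order represented by the list `l`. -/
def WBefore (l : List WOp) (a b : WOp) : Prop :=
  ∃ l1 l2 l3, l = l1 ++ a :: l2 ++ b :: l3

/-- A total order is valid if it respects real-time precedence. -/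
def WValid (l : List WOp) : Prop :=
  ∀ a ∈ l, ∀ b ∈ l, a.f < b.s → WBefore l a b

/-- In the total order `l`, every read follows its dictating write, and the total
weight of the writes ordered at or after the dictating write and before the read
(including the dictating write itself) is at most `k`. -/
def WKAtomicOrder (k : ℕ) (l : List WOp) : Prop :=
  ∀ r ∈ l, r.isRead = true → ∀ w ∈ l, w.isRead = false → w.val = r.val →
    ∃ l1 l2 l3, l = l1 ++ w :: l2 ++ r :: l3 ∧
      w.wt + ((l2.filter (fun op => op.isRead = false)).map WOp.wt).sum ≤ k

/-- A weighted history (given as a list of operations) is weighted-`k`-atomic if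
some valid total order of its operations satisfies the weighted separation bound. -/
def WeightedKAtomic (k : ℕ) (H : List WOp) : Prop :=
  ∃ l : List WOp, l.Perm H ∧ WValid l ∧ WKAtomicOrder k l

/-- Well-formedness of a weighted history. -/
def WWf (H : List WOp) : Prop :=
  H.Nodup ∧
  (∀ op ∈ H, op.s < op.f) ∧
  (∀ op1 ∈ H, ∀ op2 ∈ H, op1 ≠ op2 → op1.s ≠ op2.s ∧ op1.f ≠ op2.f ∧ op1.s ≠ op2.f) ∧
  (∀ w1 ∈ H, ∀ w2 ∈ H, w1.isRead = false → w2.isRead = false → w1.val = w2.val → w1 = w2) ∧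
  (∀ w ∈ H, w.isRead = false → 0 < w.wt) ∧
  (∀ r ∈ H, r.isRead = true → ∃ w ∈ H, w.isRead = false ∧ w.val = r.val ∧ w.f < r.s)

/-- Bin packing: `n` items with sizes `sz` can be partitioned into `m` bins each
of total size at most `B`. -/
def BinPackingSolvable (n m B : ℕ) (sz : Fin n → ℕ) : Prop :=
  ∃ assign : Fin n → Fin m, ∀ b : Fin m,
    ∑ i ∈ Finset.univ.filter (fun i => assign i = b), sz i ≤ B

/-- The `i`-th short write `w(i)` (weight 1). -/
def shortW (i : ℕ) : WOp := ⟨3 * i, 3 * i + 1, false, i, 1⟩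

/-- The `i`-th read `r(i)`, a dictated read of `w(i)`, positioned after `w(i+1)`
and before `w(i+2)`. -/
def readOp (i : ℕ) : WOp := ⟨3 * i + 4 + 1/4, 3 * i + 5 + 1/2, true, i, 1⟩

/-- The `j`-th long write, with weight `sz j` and no dictated reads, forced after
`w(1)` and before `w(m+1)` but concurrent with everything in between. -/
def longW (n m : ℕ) (sz : Fin n → ℕ) (j : Fin n) : WOp :=
  ⟨4 + ((j : ℚ) + 1) / (2 * n + 5), 3 * m + 3 - ((j : ℚ) + 1) / (2 * n + 5),
    false, m + 2 + j, sz j⟩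

/-- The weighted history constructed from a bin-packing instance: short writes
`w(1), …, w(m+1)`, reads `r(1), …, r(m)`, and `n` long writes. -/
def reduction (n m : ℕ) (sz : Fin n → ℕ) : List WOp :=
  ((List.range' 1 (m + 1)).map shortW) ++ ((List.range' 1 m).map readOp) ++
    ((List.finRange n).map (longW n m sz))

-- general lemmas
lemma wbefore_of_indexOf : ∀ {l : List WOp} {a b : WOp}, b ∈ l →
    l.idxOf a < l.idxOf b → WBefore l a b := by
  intro l
  induction l with
  | nil => intro a b hb; simp at hb
  | cons c t ih =>
    intro a b hb h
    by_cases hca : c = a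
    · subst hca
      have hbc : b ≠ c := by
        rintro rfl; simp [List.idxOf_cons_self] at h
      have hbt : b ∈ t := by
        rcases List.mem_cons.1 hb with h' | h'
        · exact absurd h' hbc
        · exact h'
      rcases List.mem_iff_append.1 hbt with ⟨t1, t2, rfl⟩
      exact ⟨[], t1, t2, rfl⟩
    · have hcb : c ≠ b := by
        rintro rfl; simp [List.idxOf_cons_self] at h
      rw [List.idxOf_cons_ne _ hca, List.idxOf_cons_ne _ hcb] at h
      have hbt : b ∈ t := by
        rcases List.mem_cons.1 hb with h' | h'
        · exact absurd h'.symm hcb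
        · exact h'
      obtain ⟨l1, l2, l3, rfl⟩ := ih hbt (Nat.succ_lt_succ_iff.mp h)
      exact ⟨c :: l1, l2, l3, rfl⟩

lemma pairwise_rel_of_wbefore {R : WOp → WOp → Prop} {l : List WOp} {a b : WOp}
    (hp : List.Pairwise R l) (h : WBefore l a b) : R a b := by
  obtain ⟨l1, l2, l3, rfl⟩ := h
  rw [List.pairwise_append] at hp
  exact hp.2.2 a (List.mem_append_right _ (List.mem_cons_self)) b (List.mem_cons_self)

lemma valid_of_pairwise {l : List WOp} (hsf : ∀ x ∈ l, x.s < x.f)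
    (hp : List.Pairwise (fun a b => ¬ b.f < a.s) l) : WValid l := by
  intro a ha b hb hab
  have hne : a ≠ b := by
    rintro rfl; exact absurd (lt_trans (hsf a ha) hab) (lt_irrefl _)
  rcases lt_or_ge (l.idxOf a) (l.idxOf b) with h | h
  · exact wbefore_of_indexOf hb h
  · rcases lt_or_eq_of_le h with h | h
    · exact absurd hab (pairwise_rel_of_wbefore hp (wbefore_of_indexOf ha h))
    · exact absurd ((List.idxOf_inj hb).1 h) (Ne.symm hne)

lemma decomp_indexOf {l l1 l2 l3 : List WOp} {w r : WOp} (hnd : l.Nodup)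
    (h : l = l1 ++ w :: l2 ++ r :: l3) :
    l.idxOf w = l1.length ∧ l.idxOf r = l1.length + 1 + l2.length := by
  subst h
  rw [List.nodup_append] at hnd
  obtain ⟨nd1, nd2, disj⟩ := hnd
  have hw1 : w ∉ l1 := by
    intro hc
    rw [List.nodup_append] at nd1
    exact nd1.2.2 _ hc _ (List.mem_cons_self) rfl
  have hwmem : w ∈ l1 ++ w :: l2 := List.mem_append_right _ (List.mem_cons_self)
  have hrleft : r ∉ l1 ++ w :: l2 := fun hc => disj _ hc _ (List.mem_cons_self) rfl
  constructor
  · rw [List.idxOf_append_of_mem hwmem, List.idxOf_append_of_notMem hw1,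
      List.idxOf_cons_self]
    omega
  · rw [List.idxOf_append_of_notMem hrleft, List.idxOf_cons_self]
    simp [List.length_append]
    omega

lemma mem_middle {l l1 l2 l3 : List WOp} {w r x : WOp} (hnd : l.Nodup)
    (h : l = l1 ++ w :: l2 ++ r :: l3) (hx : x ∈ l)
    (h1 : l.idxOf w < l.idxOf x) (h2 : l.idxOf x < l.idxOf r) : x ∈ l2 := by
  obtain ⟨hw, hr⟩ := decomp_indexOf hnd h
  rw [hw] at h1; rw [hr] at h2
  subst h
  rw [List.nodup_append] at hnd
  obtain ⟨nd1, nd2, disj⟩ := hnd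
  rcases List.mem_append.1 hx with hx1 | hx2
  · rw [List.idxOf_append_of_mem hx1] at h1 h2
    rcases List.mem_append.1 hx1 with hl1 | hl2
    · rw [List.idxOf_append_of_mem hl1] at h1
      have := List.idxOf_lt_length_iff.2 hl1
      omega
    · rcases List.mem_cons.1 hl2 with rfl | hl3
      · have hx1' : x ∉ l1 := by
          intro hc
          rw [List.nodup_append] at nd1
          exact nd1.2.2 _ hc _ (List.mem_cons_self) rfl
        rw [List.idxOf_append_of_notMem hx1', List.idxOf_cons_self] at h1
        omega
      · exact hl3
  · exfalso
    have hxleft : x ∉ l1 ++ w :: l2 := fun hc => disj _ hc _ hx2 rfl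
    rw [List.idxOf_append_of_notMem hxleft] at h2
    rcases List.mem_cons.1 hx2 with rfl | hx3
    · rw [List.idxOf_cons_self] at h2
      simp [List.length_append] at h2
      omega
    · have hxr : x ≠ r := by
        rintro rfl
        rw [List.nodup_cons] at nd2
        exact nd2.1 hx3
      rw [List.idxOf_cons_ne _ (fun h => hxr h.symm)] at h2
      simp [List.length_append] at h2
      omega

lemma indexOf_lt_of_wbefore {l : List WOp} {a b : WOp} (hnd : l.Nodup)
    (h : WBefore l a b) : l.idxOf a < l.idxOf b := by
  obtain ⟨l1, l2, l3, rfl⟩ := h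
  obtain ⟨ha, hb⟩ := decomp_indexOf hnd rfl
  omega

-- Part 2: simp lemmas, numeric facts, reduction facts
@[simp] lemma shortW_s (i : ℕ) : (shortW i).s = 3*i := rfl
@[simp] lemma shortW_f (i : ℕ) : (shortW i).f = 3*i+1 := rfl
@[simp] lemma shortW_isRead (i : ℕ) : (shortW i).isRead = false := rfl
@[simp] lemma shortW_val (i : ℕ) : (shortW i).val = i := rfl
@[simp] lemma shortW_wt (i : ℕ) : (shortW i).wt = 1 := rfl
@[simp] lemma readOp_s (i : ℕ) : (readOp i).s = 3*i+4+1/4 := rfl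
@[simp] lemma readOp_f (i : ℕ) : (readOp i).f = 3*i+5+1/2 := rfl
@[simp] lemma readOp_isRead (i : ℕ) : (readOp i).isRead = true := rfl
@[simp] lemma readOp_val (i : ℕ) : (readOp i).val = i := rfl
@[simp] lemma readOp_wt (i : ℕ) : (readOp i).wt = 1 := rfl

variable {n m : ℕ} {sz : Fin n → ℕ}

@[simp] lemma longW_isRead (j : Fin n) : (longW n m sz j).isRead = false := rfl
@[simp] lemma longW_val (j : Fin n) : (longW n m sz j).val = m + 2 + j := rfl
@[simp] lemma longW_wt (j : Fin n) : (longW n m sz j).wt = sz j := rfl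

lemma eps_pos (j : Fin n) : (0:ℚ) < ((j:ℚ)+1)/(2*n+5) := by
  apply div_pos <;> positivity

lemma eps_lt_one (j : Fin n) : ((j:ℚ)+1)/(2*n+5) < 1 := by
  rw [div_lt_one (by positivity)]
  have : (j:ℚ) < n := by exact_mod_cast j.isLt
  linarith

lemma longW_s_gt (j : Fin n) : 4 < (longW n m sz j).s := by
  have := eps_pos j
  show (4:ℚ) < 4 + ((j:ℚ)+1)/(2*n+5)
  linarith

lemma longW_s_lt (j : Fin n) : (longW n m sz j).s < 5 := by
  have := eps_lt_one j
  show 4 + ((j:ℚ)+1)/(2*n+5) < 5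
  linarith

lemma longW_f_gt (j : Fin n) : 3*(m:ℚ)+2 < (longW n m sz j).f := by
  have := eps_lt_one j
  show 3*(m:ℚ)+2 < 3*m + 3 - ((j:ℚ)+1)/(2*n+5)
  linarith

lemma longW_f_lt (j : Fin n) : (longW n m sz j).f < 3*(m:ℚ)+3 := by
  have := eps_pos j
  show 3*(m:ℚ) + 3 - ((j:ℚ)+1)/(2*n+5) < 3*m+3
  linarith

lemma mem_reduction_iff {x : WOp} : x ∈ reduction n m sz ↔
    (∃ i, 1 ≤ i ∧ i ≤ m+1 ∧ x = shortW i) ∨ (∃ i, 1 ≤ i ∧ i ≤ m ∧ x = readOp i) ∨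
    ∃ j, x = longW n m sz j := by
  simp only [reduction, List.mem_append, List.mem_map, List.mem_range'_1, List.mem_finRange]
  constructor
  · rintro ((⟨i, hi, rfl⟩ | ⟨i, hi, rfl⟩) | ⟨j, _, rfl⟩)
    · exact Or.inl ⟨i, hi.1, by omega, rfl⟩
    · exact Or.inr (Or.inl ⟨i, hi.1, by omega, rfl⟩)
    · exact Or.inr (Or.inr ⟨j, rfl⟩)
  · rintro (⟨i, h1, h2, rfl⟩ | ⟨i, h1, h2, rfl⟩ | ⟨j, rfl⟩)
    · exact Or.inl (Or.inl ⟨i, ⟨h1, by omega⟩, rfl⟩)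
    · exact Or.inl (Or.inr ⟨i, ⟨h1, by omega⟩, rfl⟩)
    · exact Or.inr ⟨j, trivial, rfl⟩

lemma shortW_mem {i : ℕ} (h1 : 1 ≤ i) (h2 : i ≤ m+1) : shortW i ∈ reduction n m sz :=
  mem_reduction_iff.2 (Or.inl ⟨i, h1, h2, rfl⟩)

lemma readOp_mem {i : ℕ} (h1 : 1 ≤ i) (h2 : i ≤ m) : readOp i ∈ reduction n m sz :=
  mem_reduction_iff.2 (Or.inr (Or.inl ⟨i, h1, h2, rfl⟩))

lemma longW_mem (j : Fin n) : longW n m sz j ∈ reduction n m sz :=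
  mem_reduction_iff.2 (Or.inr (Or.inr ⟨j, rfl⟩))

lemma shortW_inj : Function.Injective shortW := by
  intro a b h
  have : (shortW a).val = (shortW b).val := by rw [h]
  simpa using this

lemma readOp_inj : Function.Injective readOp := by
  intro a b h
  have : (readOp a).val = (readOp b).val := by rw [h]
  simpa using this

lemma longW_inj : Function.Injective (longW n m sz) := by
  intro a b h
  have : (longW n m sz a).val = (longW n m sz b).val := by rw [h]
  simp only [longW_val] at this
  exact Fin.ext (by omega)

lemma sf_lt_reduction (hm : 1 ≤ m) : ∀ x ∈ reduction n m sz, x.s < x.f := by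
  intro x hx
  rcases mem_reduction_iff.1 hx with ⟨i, _, _, rfl⟩ | ⟨i, _, _, rfl⟩ | ⟨j, rfl⟩
  · simp only [shortW_s, shortW_f]; linarith
  · simp only [readOp_s, readOp_f]; linarith
  · have h1 := longW_s_lt (m := m) (sz := sz) j
    have h2 := longW_f_gt (m := m) (sz := sz) j
    have : (1:ℚ) ≤ m := by exact_mod_cast hm
    linarith

lemma nodup_reduction : (reduction n m sz).Nodup := by
  unfold reduction
  rw [List.nodup_append, List.nodup_append]
  refine ⟨⟨(List.nodup_range' ..).map shortW_inj, (List.nodup_range' ..).map readOp_inj, ?_⟩,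
    (List.nodup_finRange n).map longW_inj, ?_⟩
  · intro a ha b' hb hab
    subst hab
    rcases List.mem_map.1 ha with ⟨i, _, rfl⟩
    rcases List.mem_map.1 hb with ⟨i', _, h⟩
    have : (readOp i').isRead = (shortW i).isRead := by rw [h]
    simp at this
  · intro a ha b' hb hab
    subst hab
    rcases List.mem_map.1 hb with ⟨j, _, rfl⟩
    rcases List.mem_append.1 ha with h' | h'
    · rcases List.mem_map.1 h' with ⟨i, hi, h⟩
      rcases List.mem_range'_1.1 hi with ⟨_, hi2⟩
      have : (shortW i).val = (longW n m sz j).val := by rw [h]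
      simp at this
      omega
    · rcases List.mem_map.1 h' with ⟨i, _, h⟩
      have : (readOp i).isRead = (longW n m sz j).isRead := by rw [h]
      simp at this

-- Part 3: comparison lemmas and helper for sums
lemma short_lt_next (i : ℕ) : (shortW i).f < (shortW (i+1)).s := by
  simp only [shortW_f, shortW_s]; push_cast; linarith

lemma short_succ_lt_read (i : ℕ) : (shortW (i+1)).f < (readOp i).s := by
  simp only [shortW_f, readOp_s]; push_cast; linarith

lemma short_one_lt_long (j : Fin n) : (shortW 1).f < (longW n m sz j).s := by
  have := longW_s_gt (m := m) (sz := sz) j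
  simp only [shortW_f]; norm_num; linarith

lemma long_lt_read_m (j : Fin n) : (longW n m sz j).f < (readOp m).s := by
  have := longW_f_lt (m := m) (sz := sz) j
  simp only [readOp_s]; push_cast; linarith

lemma sum_wt_le {t : List WOp} (hnd : t.Nodup) (S : Finset WOp)
    (hS : ∀ x ∈ S, x ∈ t ∧ x.isRead = false) :
    ∑ x ∈ S, x.wt ≤ ((t.filter (fun op => op.isRead = false)).map WOp.wt).sum := by
  have hsub : S ⊆ (t.filter (fun op => op.isRead = false)).toFinset := by
    intro x hx
    rw [List.mem_toFinset, List.mem_filter]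
    exact ⟨(hS x hx).1, by simp [(hS x hx).2]⟩
  calc ∑ x ∈ S, x.wt ≤ ∑ x ∈ (t.filter (fun op => op.isRead = false)).toFinset, x.wt :=
        Finset.sum_le_sum_of_subset hsub
    _ = _ := List.sum_toFinset _ (hnd.filter _)

-- Forward direction
lemma forward_dir {B : ℕ} (hm : 1 ≤ m)
    (h : WeightedKAtomic (B + 2) (reduction n m sz)) : BinPackingSolvable n m B sz := by
  obtain ⟨l, hperm, hvalid, hatomic⟩ := h
  have hndl : l.Nodup := hperm.nodup_iff.2 nodup_reduction
  have hmem : ∀ x ∈ reduction n m sz, x ∈ l := fun x hx => hperm.mem_iff.2 hx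
  have hbef : ∀ a b : WOp, a ∈ l → b ∈ l → a.f < b.s → l.idxOf a < l.idxOf b :=
    fun a b ha hb h => indexOf_lt_of_wbefore hndl (hvalid a ha b hb h)
  have hPtop : ∀ j : Fin n, l.idxOf (longW n m sz j) < l.idxOf (readOp ((m-1)+1)) := by
    intro j
    rw [Nat.sub_add_cancel hm]
    exact hbef _ _ (hmem _ (longW_mem j)) (hmem _ (readOp_mem hm le_rfl)) (long_lt_read_m j)
  have hex : ∀ j : Fin n, ∃ i : ℕ,
      l.idxOf (longW n m sz j) < l.idxOf (readOp (i+1)) := fun j => ⟨m-1, hPtop j⟩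
  have hlt : ∀ j : Fin n, Nat.find (hex j) < m :=
    fun j => lt_of_le_of_lt (Nat.find_min' (hex j) (hPtop j)) (by omega)
  refine ⟨fun j => ⟨Nat.find (hex j), hlt j⟩, ?_⟩
  intro b
  have hgf : (Finset.univ.filter (fun j => (⟨Nat.find (hex j), hlt j⟩ : Fin m) = b)) =
      Finset.univ.filter (fun j => Nat.find (hex j) = (b:ℕ)) := by
    apply Finset.filter_congr
    intro j _
    simp [Fin.ext_iff]
  rw [hgf]
  set i : ℕ := (b:ℕ) + 1 with hi
  have hb1 : 1 ≤ i := by omega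
  have hbm : i ≤ m := by have := b.isLt; omega
  obtain ⟨l1, l2, l3, heq, hsum⟩ :=
    hatomic (readOp i) (hmem _ (readOp_mem hb1 hbm)) rfl (shortW i)
      (hmem _ (shortW_mem hb1 (by omega))) rfl rfl
  have hndl2 : l2.Nodup := by
    rw [heq] at hndl
    rw [List.nodup_append, List.nodup_append, List.nodup_cons] at hndl
    exact hndl.1.2.1.2
  have hwmem2 : shortW (i+1) ∈ l2 := by
    apply mem_middle hndl heq (hmem _ (shortW_mem (by omega) (by omega)))
    · exact hbef _ _ (hmem _ (shortW_mem hb1 (by omega)))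
        (hmem _ (shortW_mem (by omega) (by omega))) (short_lt_next i)
    · exact hbef _ _ (hmem _ (shortW_mem (by omega) (by omega)))
        (hmem _ (readOp_mem hb1 hbm)) (short_succ_lt_read i)
  have hlmem : ∀ j : Fin n, Nat.find (hex j) = (b:ℕ) → longW n m sz j ∈ l2 := by
    intro j hj
    apply mem_middle hndl heq (hmem _ (longW_mem j))
    · rcases Nat.eq_zero_or_pos (b:ℕ) with hb0 | hbpos
      · have h1 : i = 1 := by omega
        rw [h1]
        exact hbef _ _ (hmem _ (shortW_mem le_rfl (by omega))) (hmem _ (longW_mem j))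
          (short_one_lt_long j)
      · have hmin : ¬ l.idxOf (longW n m sz j) < l.idxOf (readOp (((b:ℕ)-1)+1)) :=
          Nat.find_min (hex j) (by omega)
        rw [Nat.sub_add_cancel hbpos] at hmin
        have h1 : l.idxOf (shortW i) < l.idxOf (readOp (b:ℕ)) :=
          hbef _ _ (hmem _ (shortW_mem hb1 (by omega)))
            (hmem _ (readOp_mem hbpos (by omega))) (short_succ_lt_read (b:ℕ))
        omega
    · have hspec := Nat.find_spec (hex j)
      rw [hj] at hspec
      exact hspec
  set S : Finset WOp := insert (shortW (i+1))
    ((Finset.univ.filter (fun j => Nat.find (hex j) = (b:ℕ))).image (longW n m sz)) with hSdef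
  have hnotmem : shortW (i+1) ∉
      (Finset.univ.filter (fun j => Nat.find (hex j) = (b:ℕ))).image (longW n m sz) := by
    intro hc
    obtain ⟨j, _, hj⟩ := Finset.mem_image.1 hc
    have : (longW n m sz j).val = (shortW (i+1)).val := by rw [hj]
    simp at this
    omega
  have hSsum : ∑ x ∈ S, x.wt
      = 1 + ∑ j ∈ Finset.univ.filter (fun j => Nat.find (hex j) = (b:ℕ)), sz j := by
    rw [hSdef, Finset.sum_insert hnotmem, Finset.sum_image (fun x _ y _ h => longW_inj h)]
    simp
  have hScond : ∀ x ∈ S, x ∈ l2 ∧ x.isRead = false := by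
    intro x hx
    rw [hSdef, Finset.mem_insert] at hx
    rcases hx with rfl | hx
    · exact ⟨hwmem2, rfl⟩
    · obtain ⟨j, hj, rfl⟩ := Finset.mem_image.1 hx
      exact ⟨hlmem j (by simpa using (Finset.mem_filter.1 hj).2), rfl⟩
  have hkey := sum_wt_le hndl2 S hScond
  rw [hSsum] at hkey
  simp only [shortW_wt] at hsum
  omega
-- Part 4: backward direction
def binL (n m : ℕ) (sz : Fin n → ℕ) (assign : Fin n → Fin m) (i : ℕ) : List WOp :=
  ((List.finRange n).filter (fun j => (assign j : ℕ) + 1 = i)).map (longW n m sz)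

def blockL (n m : ℕ) (sz : Fin n → ℕ) (assign : Fin n → Fin m) (i : ℕ) : List WOp :=
  binL n m sz assign i ++ [shortW (i+1), readOp i]

def orderL (n m : ℕ) (sz : Fin n → ℕ) (assign : Fin n → Fin m) : List WOp :=
  shortW 1 :: ((List.range' 1 m).map (blockL n m sz assign)).flatten

lemma perm_middle_swap {α : Type*} (a b c : List α) : (a ++ (b ++ c)).Perm (b ++ (a ++ c)) := by
  rw [← List.append_assoc, ← List.append_assoc]
  exact List.perm_append_comm.append_right c

lemma flatten_map_append_perm {α β : Type*} (A C : β → List α) (r : List β) :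
    ((r.map (fun i => A i ++ C i)).flatten).Perm ((r.map A).flatten ++ (r.map C).flatten) := by
  induction r with
  | nil => simp
  | cons x t ih =>
    simp only [List.map_cons, List.flatten_cons]
    refine ((ih.append_left (A x ++ C x))).trans ?_
    rw [List.append_assoc, List.append_assoc]
    exact (perm_middle_swap (C x) ((t.map A).flatten) ((t.map C).flatten)).append_left (A x)

lemma flatten_singleton {α β : Type*} (x : β → α) (r : List β) :
    ((r.map (fun i => [x i])).flatten) = r.map x := by
  induction r <;> simp [*]

lemma flatten_filter_perm {α : Type*} [DecidableEq α] (p : α → ℕ) :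
    ∀ (r : List ℕ), r.Nodup → ∀ (xs : List α), (∀ x ∈ xs, p x ∈ r) →
    ((r.map (fun i => xs.filter (fun x => p x = i))).flatten).Perm xs := by
  intro r
  induction r with
  | nil =>
    intro _ xs h
    have hxs : xs = [] := List.eq_nil_iff_forall_not_mem.2 (fun a ha => by simpa using h a ha)
    simp [hxs]
  | cons i t ih =>
    intro hnd xs hcov
    rw [List.nodup_cons] at hnd
    simp only [List.map_cons, List.flatten_cons]
    have hrw : (t.map (fun k => xs.filter (fun x => p x = k)))
        = (t.map (fun k => (xs.filter (fun x => ¬ p x = i)).filter (fun x => p x = k))) := by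
      apply List.map_congr_left
      intro k hk
      rw [List.filter_filter]
      apply List.filter_congr
      intro x _
      by_cases h : p x = k
      · have hki : ¬ k = i := fun h' => hnd.1 (h' ▸ hk)
        have hne : ¬ p x = i := fun h' => hki (h.symm.trans h')
        simp [h, hne, hki]
      · simp [h]
    rw [hrw]
    have ihcov : ∀ x ∈ xs.filter (fun x => ¬ p x = i), p x ∈ t := by
      intro x hx
      rw [List.mem_filter] at hx
      have := hcov x hx.1
      rcases List.mem_cons.1 this with h | h
      · exfalso; revert hx; simp [h]
      · exact h
    have ih' := ih hnd.2 (xs.filter (fun x => ¬ p x = i)) ihcov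
    refine (ih'.append_left _).trans ?_
    have hfp := List.filter_append_perm (fun x => decide (p x = i)) xs
    simpa [decide_not] using hfp

variable {n m : ℕ} {sz : Fin n → ℕ}

lemma orderL_perm (assign : Fin n → Fin m) :
    (orderL n m sz assign).Perm (reduction n m sz) := by
  have h1 : ((List.range' 1 m).map (blockL n m sz assign)).flatten.Perm
      ((((List.range' 1 m).map (fun i => binL n m sz assign i)).flatten) ++
       ((((List.range' 1 m).map (fun i => [shortW (i+1)])).flatten) ++
        (((List.range' 1 m).map (fun i => [readOp i])).flatten))) := by
    have ha := flatten_map_append_perm (fun i => binL n m sz assign i)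
      (fun i => [shortW (i+1)] ++ [readOp i]) (List.range' 1 m)
    have hb := flatten_map_append_perm (fun i => [shortW (i+1)]) (fun i => [readOp i])
      (List.range' 1 m)
    exact ha.trans (hb.append_left _)
  have h2 : (((List.range' 1 m).map (fun i => [shortW (i+1)])).flatten)
      = (List.range' 2 m).map shortW := by
    rw [flatten_singleton]
    rw [show (fun i => shortW (i+1)) = (shortW ∘ fun i => 1 + i) by
      funext i; simp [Nat.add_comm]]
    rw [← List.map_map, List.map_add_range']
  have h3 : (((List.range' 1 m).map (fun i => [readOp i])).flatten)
      = (List.range' 1 m).map readOp := flatten_singleton _ _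
  have h4 : (((List.range' 1 m).map (fun i => binL n m sz assign i)).flatten).Perm
      ((List.finRange n).map (longW n m sz)) := by
    have heq : ((List.range' 1 m).map (fun i => binL n m sz assign i)).flatten
        = ((((List.range' 1 m).map (fun i =>
            (List.finRange n).filter (fun j => (assign j : ℕ) + 1 = i))).flatten).map
            (longW n m sz)) := by
      rw [List.map_flatten, List.map_map]
      rfl
    rw [heq]
    apply List.Perm.map
    apply flatten_filter_perm (fun j => (assign j : ℕ) + 1) _ (List.nodup_range' ..)
    intro x _
    rw [List.mem_range'_1]
    exact ⟨by omega, by have := (assign x).isLt; omega⟩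
  have h5 : ((List.range' 1 m).map (blockL n m sz assign)).flatten.Perm
      (((List.finRange n).map (longW n m sz)) ++
        ((List.range' 2 m).map shortW ++ (List.range' 1 m).map readOp)) := by
    refine h1.trans ?_
    rw [h2, h3]
    exact h4.append (List.Perm.refl _)
  unfold orderL reduction
  refine (List.Perm.cons _ h5).trans ?_
  have h6 : List.range' 1 (m+1) = 1 :: List.range' 2 m := List.range'_succ
  rw [h6, List.map_cons]
  exact List.Perm.cons _ List.perm_append_comm

lemma mem_binL {assign : Fin n → Fin m} {x : WOp} {i : ℕ} (hx : x ∈ binL n m sz assign i) :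
    ∃ j : Fin n, x = longW n m sz j := by
  unfold binL at hx
  rcases List.mem_map.1 hx with ⟨j, _, rfl⟩
  exact ⟨j, rfl⟩

lemma mem_blockL {assign : Fin n → Fin m} {x : WOp} {i : ℕ}
    (hx : x ∈ blockL n m sz assign i) :
    x = shortW (i+1) ∨ x = readOp i ∨ ∃ j : Fin n, x = longW n m sz j := by
  unfold blockL at hx
  rcases List.mem_append.1 hx with h | h
  · exact Or.inr (Or.inr (mem_binL h))
  · rcases List.mem_cons.1 h with rfl | h
    · exact Or.inl rfl
    · rcases List.mem_cons.1 h with rfl | h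
      · exact Or.inr (Or.inl rfl)
      · simp at h

lemma blockL_bound {assign : Fin n → Fin m} {x : WOp} {i : ℕ}
    (h1 : 1 ≤ i) (h2 : i ≤ m) (hx : x ∈ blockL n m sz assign i) :
    x.s ≤ 3*(i:ℚ)+4+1/4 ∧ 3*(i:ℚ)+2 ≤ x.f := by
  have hi1 : (1:ℚ) ≤ (i:ℚ) := by exact_mod_cast h1
  have hi2 : (i:ℚ) ≤ (m:ℚ) := by exact_mod_cast h2
  rcases mem_blockL hx with rfl | rfl | ⟨j, rfl⟩
  · simp only [shortW_s, shortW_f]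
    push_cast
    constructor <;> linarith
  · simp only [readOp_s, readOp_f]
    constructor <;> linarith
  · have a1 := longW_s_lt (m := m) (sz := sz) j
    have a2 := longW_f_gt (m := m) (sz := sz) j
    constructor <;> linarith

lemma orderL_valid (assign : Fin n → Fin m) (hm : 1 ≤ m) :
    WValid (orderL n m sz assign) := by
  apply valid_of_pairwise
  · intro x hx
    exact sf_lt_reduction hm x ((orderL_perm assign).mem_iff.1 hx)
  · unfold orderL
    rw [List.pairwise_cons]
    constructor
    · intro b hb
      rcases List.mem_flatten.1 hb with ⟨lb, hlb, hbin⟩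
      rcases List.mem_map.1 hlb with ⟨i, hi, rfl⟩
      rcases List.mem_range'_1.1 hi with ⟨hi1, hi2⟩
      have hbf := (blockL_bound hi1 (by omega) hbin).2
      simp only [shortW_s]
      have : (1:ℚ) ≤ (i:ℚ) := by exact_mod_cast hi1
      push_cast
      linarith
    · rw [List.pairwise_flatten]
      constructor
      · intro lb hlb
        rcases List.mem_map.1 hlb with ⟨i, hi, rfl⟩
        rcases List.mem_range'_1.1 hi with ⟨hi1, hi2⟩
        have hi1' : (1:ℚ) ≤ (i:ℚ) := by exact_mod_cast hi1
        have hi2' : (i:ℚ) ≤ (m:ℚ) := by exact_mod_cast (by omega : i ≤ m)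
        unfold blockL
        rw [List.pairwise_append]
        refine ⟨?_, ?_, ?_⟩
        · apply List.pairwise_of_forall_mem_list
          intro a ha b hb
          obtain ⟨ja, rfl⟩ := mem_binL ha
          obtain ⟨jb, rfl⟩ := mem_binL hb
          have a1 := longW_s_lt (m := m) (sz := sz) ja
          have a2 := longW_f_gt (m := m) (sz := sz) jb
          intro hc
          linarith
        · refine List.pairwise_cons.2 ⟨?_, List.pairwise_singleton _ _⟩
          intro b hb
          rw [List.mem_singleton] at hb
          subst hb
          simp only [readOp_f, shortW_s]
          push_cast
          intro hc
          linarith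
        · intro a ha b hb
          obtain ⟨ja, rfl⟩ := mem_binL ha
          have a1 := longW_s_lt (m := m) (sz := sz) ja
          rcases List.mem_cons.1 hb with rfl | hb
          · simp only [shortW_f]
            push_cast
            intro hc
            linarith
          · rcases List.mem_cons.1 hb with rfl | hb
            · simp only [readOp_f]
              push_cast
              intro hc
              linarith
            · simp at hb
      · rw [List.pairwise_map]
        apply List.Pairwise.imp_of_mem ?_ (List.pairwise_lt_range' (s := 1) (n := m))
        intro i i' hi hi' hlt a ha b hb
        rcases List.mem_range'_1.1 hi with ⟨h1, h2⟩
        rcases List.mem_range'_1.1 hi' with ⟨h1', h2'⟩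
        have ba := (blockL_bound h1 (by omega) ha).1
        have bb := (blockL_bound h1' (by omega) hb).2
        have hcast : (i:ℚ) + 1 ≤ (i':ℚ) := by exact_mod_cast hlt
        intro hc
        linarith
-- Part 5: sums and atomicity for the constructed order
lemma blockL_eq (assign : Fin n → Fin m) (i : ℕ) :
    blockL n m sz assign i = binL n m sz assign i ++ [shortW (i+1), readOp i] := rfl

lemma binL_filter (assign : Fin n → Fin m) (i : ℕ) :
    (binL n m sz assign i).filter (fun op => op.isRead = false) = binL n m sz assign i := by
  rw [List.filter_eq_self]
  intro a ha
  obtain ⟨j, rfl⟩ := mem_binL ha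
  simp

lemma binL_sum (assign : Fin n → Fin m) (i : ℕ) :
    ((binL n m sz assign i).map WOp.wt).sum
      = ∑ j ∈ Finset.univ.filter (fun j => (assign j : ℕ) + 1 = i), sz j := by
  unfold binL
  rw [List.map_map]
  have h1 : (WOp.wt ∘ longW n m sz) = fun j => sz j := rfl
  rw [h1]
  rw [← List.sum_toFinset _ (((List.nodup_finRange n)).filter _)]
  congr 1
  ext j
  simp [List.mem_filter]

lemma binL_bound (assign : Fin n → Fin m) {B i : ℕ}
    (hB : ∀ b : Fin m, ∑ j ∈ Finset.univ.filter (fun j => assign j = b), sz j ≤ B)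
    (h1 : 1 ≤ i) (h2 : i ≤ m) :
    ((binL n m sz assign i).map WOp.wt).sum ≤ B := by
  rw [binL_sum]
  have hlt : i - 1 < m := by omega
  have heq : Finset.univ.filter (fun j => (assign j : ℕ) + 1 = i)
      = Finset.univ.filter (fun j => assign j = ⟨i-1, hlt⟩) := by
    apply Finset.filter_congr
    intro j _
    rw [Fin.ext_iff]
    show (assign j : ℕ) + 1 = i ↔ (assign j : ℕ) = i - 1
    omega
  rw [heq]
  exact hB _

lemma orderL_atomic (assign : Fin n → Fin m) (hm : 1 ≤ m) (B : ℕ)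
    (hB : ∀ b : Fin m, ∑ j ∈ Finset.univ.filter (fun j => assign j = b), sz j ≤ B) :
    WKAtomicOrder (B+2) (orderL n m sz assign) := by
  intro r hr hrread w hw hwwrite hval
  have hrmem : r ∈ reduction n m sz := (orderL_perm assign).mem_iff.1 hr
  have hwmem : w ∈ reduction n m sz := (orderL_perm assign).mem_iff.1 hw
  rcases mem_reduction_iff.1 hrmem with ⟨i, hi1, hi2, rfl⟩ | ⟨i, h1, h2, rfl⟩ | ⟨j, rfl⟩
  · exact absurd hrread (by simp)
  · rcases mem_reduction_iff.1 hwmem with ⟨i', hi1', hi2', rfl⟩ | ⟨i', _, _, rfl⟩ | ⟨j, rfl⟩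
    · have hii : i' = i := by simpa using hval
      subst hii
      clear hval hwwrite hrread hr hw hrmem hwmem
      rcases eq_or_lt_of_le h1 with h1' | h1'
      · -- i = 1
        subst h1'
        obtain ⟨c, hc⟩ : ∃ c, m = 1 + c := ⟨m - 1, by omega⟩
        subst hc
        refine ⟨[], binL n (1+c) sz assign 1 ++ [shortW 2],
          ((List.range' 2 c).map (blockL n (1+c) sz assign)).flatten, ?_, ?_⟩
        · unfold orderL
          rw [show List.range' 1 (1+c) = 1 :: List.range' 2 c by
            rw [Nat.add_comm 1 c, List.range'_succ]]
          simp [blockL_eq, List.append_assoc]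
        · rw [List.filter_append, binL_filter]
          have hf : List.filter (fun op => op.isRead = false) [shortW 2] = [shortW 2] := by
            simp
          rw [hf, List.map_append, List.sum_append]
          have hb := binL_bound assign hB le_rfl (by omega : 1 ≤ 1 + c)
          simp only [List.map_cons, List.map_nil, shortW_wt, List.sum_cons, List.sum_nil]
          omega
      · -- 2 ≤ i
        obtain ⟨a, ha⟩ : ∃ a, i' = a + 2 := ⟨i' - 2, by omega⟩
        subst ha
        obtain ⟨c, hc⟩ : ∃ c, m = (a + 2) + c := ⟨m - (a+2), by omega⟩
        subst hc
        refine ⟨shortW 1 :: (((List.range' 1 a).map (blockL n ((a+2)+c) sz assign)).flatten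
            ++ binL n ((a+2)+c) sz assign (a+1)),
          readOp (a+1) :: (binL n ((a+2)+c) sz assign (a+2) ++ [shortW (a+3)]),
          ((List.range' (a+3) c).map (blockL n ((a+2)+c) sz assign)).flatten, ?_, ?_⟩
        · unfold orderL
          have hr' : List.range' 1 ((a+2)+c)
              = List.range' 1 a ++ (a+1) :: (a+2) :: List.range' (a+3) c := by
            have h0 := List.range'_append (s := 1) (m := a) (n := c+2) (step := 1)
            simp only [Nat.one_mul] at h0
            rw [show (a+2)+c = a+(c+2) by omega, ← h0]
            congr 1
            rw [show 1+a = a+1 by omega, List.range'_succ, show a+1+1 = a+2 by omega,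
              List.range'_succ, show a+2+1 = a+3 by omega]
          rw [hr']
          simp [blockL_eq, List.append_assoc]
        · rw [List.filter_cons_of_neg (by simp), List.filter_append, binL_filter]
          have hf : List.filter (fun op => op.isRead = false) [shortW (a+3)] = [shortW (a+3)] := by
            simp
          rw [hf, List.map_append, List.sum_append]
          have hb := binL_bound assign hB (by omega : 1 ≤ a + 2) (by omega : a + 2 ≤ (a+2)+c)
          simp only [List.map_cons, List.map_nil, shortW_wt, List.sum_cons, List.sum_nil]
          omega
    · exact absurd hwwrite (by simp)
    · exfalso
      have hv : m + 2 + (j:ℕ) = i := by simpa using hval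
      omega
  · exact absurd hrread (by simp)

/-- The constructed history instance with `k = B + 2` has a weighted-`k`-atomic
valid total order iff the bin-packing instance has a solution. -/
theorem stmt_10 (n m B : ℕ) (sz : Fin n → ℕ) (hsz : ∀ i, 0 < sz i) (hm : 1 ≤ m) :
    WeightedKAtomic (B + 2) (reduction n m sz) ↔ BinPackingSolvable n m B sz := by
  constructor
  · exact forward_dir hm
  · rintro ⟨assign, hB⟩
    exact ⟨orderL n m sz assign, orderL_perm assign, orderL_valid assign hm,
      orderL_atomic assign hm B hB⟩
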